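/- Let F be a finite set, let 𝒱 be a family of subsets of F, and let ≤ be a linear order on 𝒱 such that for every t ∈ F the set χ(t) = {p ∈ 𝒱 : t ∈ p} is ≤-convex. Then for every strictly increasing sequence p₀ < p₁ < ... < p_m in 𝒱, one has Σ_{i<m} |p_i △ p_{i+1}| ≤ 2|F|, where △ denotes symmetric difference. -/

import Mathlib

/-- Let `F` be a finite set, `𝒱` a family of subsets of `F`, and `≤` a linear
order on `𝒱` such that each `χ(t) = {p ∈ 𝒱 : t ∈ p}` is `≤`-convex.  Then for every
strictly increasing sequence `p₀ < p₁ < ... < p_m` in `𝒱`,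
`Σ_{i<m} |p_i △ p_{i+1}| ≤ 2|F|`. -/
theorem convex_linear_order_sum_dist {F : Type*} [Fintype F] (V : Set (Set F))
    (le : {p : Set F // p ∈ V} → {p : Set F // p ∈ V} → Prop)
    (hlin : IsLinearOrder _ le)
    (hconvex : ∀ t : F, ∀ p q v, le p v → le v q → t ∈ p.1 → t ∈ q.1 → t ∈ v.1)
    (m : ℕ) (p : Fin (m + 1) → {p : Set F // p ∈ V})
    (hmono : ∀ i j : Fin (m + 1), i < j → le (p i) (p j) ∧ p i ≠ p j) :
    ∑ i : Fin m, (symmDiff (p i.castSucc).1 (p i.succ).1).ncard ≤ 2 * Fintype.card F := by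
  classical
  have hrefl : ∀ q, le q q := by haveI := hlin; exact fun q => refl_of le q
  have hle : ∀ i j : Fin (m + 1), i ≤ j → le (p i) (p j) := by
    intro i j h
    rcases lt_or_eq_of_le h with h | h
    · exact (hmono i j h).1
    · subst h; exact hrefl _
  have conv : ∀ (t : F) (i k j : Fin (m + 1)), i ≤ k → k ≤ j →
      t ∈ (p i).1 → t ∈ (p j).1 → t ∈ (p k).1 := by
    intro t i k j h1 h2 hi hj
    exact hconvex t (p i) (p j) (p k) (hle i k h1) (hle k j h2) hi hj
  have key : ∀ t : F,
      (Finset.univ.filter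
        (fun i : Fin m => t ∈ symmDiff (p i.castSucc).1 (p i.succ).1)).card ≤ 2 := by
    intro t
    by_contra h
    push_neg at h
    set s := Finset.univ.filter
        (fun i : Fin m => t ∈ symmDiff (p i.castSucc).1 (p i.succ).1) with hs
    have h3 : 3 ≤ s.card := h
    let e := s.orderEmbOfCardLe h3
    have mem : ∀ k : Fin 3, e k ∈ s := fun k => s.orderEmbOfCardLe_mem h3 k
    set a := e 0 with ha
    set b := e 1 with hb
    set c := e 2 with hc
    have hab : a < b := e.strictMono (by decide)
    have hbc : b < c := e.strictMono (by decide)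
    have ma := mem 0; have mb := mem 1; have mc := mem 2
    rw [hs, Finset.mem_filter] at ma mb mc
    rw [Set.mem_symmDiff] at ma mb mc
    -- order facts
    have o1 : (a.succ : Fin (m + 1)) ≤ b.castSucc := by
      simp only [Fin.le_def, Fin.lt_def, Fin.val_succ, Fin.coe_castSucc] at *
      omega
    have o2 : (b.succ : Fin (m + 1)) ≤ c.castSucc := by
      simp only [Fin.le_def, Fin.lt_def, Fin.val_succ, Fin.coe_castSucc] at *
      omega
    have o3 : (b.castSucc : Fin (m + 1)) ≤ b.succ := (Fin.castSucc_lt_succ : b.castSucc < b.succ).le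
    have o4 : (c.castSucc : Fin (m + 1)) ≤ c.succ := (Fin.castSucc_lt_succ : c.castSucc < c.succ).le
    have o5 : (a.castSucc : Fin (m + 1)) ≤ a.succ := (Fin.castSucc_lt_succ : a.castSucc < a.succ).le
    rcases mb.2 with ⟨hbT, hbF⟩ | ⟨hbT, hbF⟩
    · -- t ∈ p b.castSucc, t ∉ p b.succ
      rcases mc.2 with ⟨hcT, _⟩ | ⟨hcT, _⟩
      · exact hbF (conv t b.castSucc b.succ c.castSucc o3 o2 hbT hcT)
      · exact hbF (conv t b.castSucc b.succ c.succ o3 (o2.trans o4) hbT hcT)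
    · -- t ∈ p b.succ, t ∉ p b.castSucc
      rcases ma.2 with ⟨haT, _⟩ | ⟨haT, _⟩
      · exact hbF (conv t a.castSucc b.castSucc b.succ (o5.trans o1) o3 haT hbT)
      · exact hbF (conv t a.succ b.castSucc b.succ o1 o3 haT hbT)
  calc ∑ i : Fin m, (symmDiff (p i.castSucc).1 (p i.succ).1).ncard
      = ∑ i : Fin m, (Finset.univ.filter
          (fun t : F => t ∈ symmDiff (p i.castSucc).1 (p i.succ).1)).card := by
        refine Finset.sum_congr rfl fun i _ => ?_
        rw [Set.ncard_eq_toFinset_card']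
        congr 1
        ext t
        simp [Set.mem_symmDiff, Finset.mem_symmDiff, Set.mem_toFinset]
    _ = ∑ i : Fin m, ∑ t : F,
          (if t ∈ symmDiff (p i.castSucc).1 (p i.succ).1 then 1 else 0) :=
        Finset.sum_congr rfl fun i _ => Finset.card_filter _ _
    _ = ∑ t : F, ∑ i : Fin m,
          (if t ∈ symmDiff (p i.castSucc).1 (p i.succ).1 then 1 else 0) :=
        Finset.sum_comm
    _ ≤ ∑ _t : F, 2 := by
        refine Finset.sum_le_sum fun t _ => ?_
        rw [← Finset.card_filter]
        exact key t
    _ = 2 * Fintype.card F := by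
        simp [mul_comm]
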